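/- Let F = f + g with f convex and L-smooth and g proper convex lsc, with nonempty optimal set Ω_* and optimal value F_*. Suppose F satisfies the HEB on S_{ε₀} with exponent θ ∈ (0, 1/2] and constant c, and F(x₀) − F_* ≤ ε₀. Consider the restarted proximal gradient scheme: stage k runs t_k = ⌈c²L ε_{k−1}^{2θ−1}⌉ proximal gradient steps with step size 1/L starting from x_{k−1}, producing x_k, where ε_k = ε₀/2^k. Then F(x_k) − F_* ≤ ε_k for all k ≥ 0. -/

import Mathlib

open RealInnerProductSpace


lemma aux_convex_grad_ineq {E : Type*} [NormedAddCommGroup E] [InnerProductSpace ℝ E]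
    [CompleteSpace E]
    {f : E → ℝ} (hf : ConvexOn ℝ Set.univ f) {x z gx : E}
    (hg : HasGradientAt f gx x) : f x + ⟪gx, z - x⟫ ≤ f z := by
  have h1 : HasDerivAt (fun t : ℝ => x + t • (z - x)) (z - x) 0 := by
    simpa using ((hasDerivAt_id (0:ℝ)).smul_const (z - x)).const_add x
  have h2 : HasDerivAt (fun t : ℝ => f (x + t • (z - x))) ⟪gx, z - x⟫ 0 := by
    have h0 : HasFDerivAt f (InnerProductSpace.toDual ℝ E gx) ((fun t : ℝ => x + t • (z - x)) 0) := by
      simpa using hasGradientAt_iff_hasFDerivAt.mp hg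
    have := h0.comp_hasDerivAt (0:ℝ) h1
    simp at this; exact this
  have hsl := hasDerivAt_iff_tendsto_slope.mp h2
  have hsl' : Filter.Tendsto (slope (fun t : ℝ => f (x + t • (z - x))) 0)
      (nhdsWithin 0 (Set.Ioi 0)) (nhds ⟪gx, z - x⟫) :=
    hsl.mono_left (nhdsWithin_mono 0 (fun t ht => ne_of_gt ht))
  have hineq : ⟪gx, z - x⟫ ≤ f z - f x := by
    refine le_of_tendsto hsl' ?_
    filter_upwards [Ioc_mem_nhdsGT_of_mem (by norm_num : (0:ℝ) ∈ Set.Ico 0 1)] with t ht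
    have hconv := hf.2 (Set.mem_univ x) (Set.mem_univ z)
      (by linarith [ht.1.le, ht.2] : (0:ℝ) ≤ 1 - t) ht.1.le (by ring)
    have hxt : x + t • (z - x) = (1 - t) • x + t • z := by module
    have hle : f (x + t • (z - x)) ≤ (1 - t) * f x + t * f z := by rw [hxt]; simpa using hconv
    have ht0 : (0:ℝ) < t := ht.1
    rw [slope_def_field, sub_zero, div_le_iff₀ ht0]
    simp only [zero_smul, add_zero]
    nlinarith [hle]
  linarith


lemma aux_descent {E : Type*} [NormedAddCommGroup E] [InnerProductSpace ℝ E] [CompleteSpace E]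
    {f : E → ℝ} {f' : E → E} {L : ℝ} (hL : 0 < L)
    (hgrad : ∀ x, HasGradientAt f (f' x) x)
    (hlip : ∀ x y, ‖f' x - f' y‖ ≤ L * ‖x - y‖) (x y : E) :
    f y ≤ f x + ⟪f' x, y - x⟫ + L / 2 * ‖y - x‖ ^ 2 := by
  set c : ℝ → E := fun t => x + t • (y - x) with hc
  have hcc : Continuous c := by continuity
  have hcontf' : Continuous f' := by
    refine (LipschitzWith.continuous (K := L.toNNReal) ?_)
    refine LipschitzWith.of_dist_le_mul fun a b => ?_
    rw [dist_eq_norm, dist_eq_norm, Real.coe_toNNReal L hL.le]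
    exact hlip a b
  have hψ : ∀ t : ℝ, HasDerivAt (fun s => f (c s)) ⟪f' (c t), y - x⟫ t := by
    intro t
    have h1 : HasDerivAt c (y - x) t := by
      simpa [hc] using ((hasDerivAt_id t).smul_const (y - x)).const_add x
    have h0 : HasFDerivAt f (InnerProductSpace.toDual ℝ E (f' (c t))) (c t) := by
      simpa using hasGradientAt_iff_hasFDerivAt.mp (hgrad (c t))
    have := h0.comp_hasDerivAt t h1
    simp at this; exact this
  have hψcont : Continuous fun t => ⟪f' (c t), y - x⟫ :=
    (hcontf'.comp hcc).inner continuous_const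
  have hint : IntervalIntegrable (fun t => ⟪f' (c t), y - x⟫) MeasureTheory.volume 0 1 :=
    hψcont.intervalIntegrable 0 1
  have hftc : ∫ t in (0:ℝ)..1, ⟪f' (c t), y - x⟫ = f (c 1) - f (c 0) :=
    intervalIntegral.integral_eq_sub_of_hasDerivAt (fun t _ => hψ t) hint
  have hc0 : c 0 = x := by simp [hc]
  have hc1 : c 1 = y := by simp [hc]
  have hmono : ∫ t in (0:ℝ)..1, ⟪f' (c t), y - x⟫ ≤
      ∫ t in (0:ℝ)..1, (⟪f' x, y - x⟫ + L * t * ‖y - x‖ ^ 2) := by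
    refine intervalIntegral.integral_mono_on (by norm_num) hint ?_ ?_
    · exact (Continuous.intervalIntegrable (by continuity) 0 1)
    · intro t ht
      have h1 : ⟪f' (c t), y - x⟫ - ⟪f' x, y - x⟫ = ⟪f' (c t) - f' x, y - x⟫ := by
        rw [inner_sub_left]
      have h2 : ⟪f' (c t) - f' x, y - x⟫ ≤ ‖f' (c t) - f' x‖ * ‖y - x‖ :=
        real_inner_le_norm _ _
      have h3 : ‖f' (c t) - f' x‖ ≤ L * (t * ‖y - x‖) := by
        have := hlip (c t) x
        simpa [hc, norm_smul, abs_of_nonneg ht.1] using this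
      nlinarith [norm_nonneg (y - x), ht.1, mul_le_mul_of_nonneg_right h3 (norm_nonneg (y - x))]
  have hval : ∫ t in (0:ℝ)..1, (⟪f' x, y - x⟫ + L * t * ‖y - x‖ ^ 2)
      = ⟪f' x, y - x⟫ + L / 2 * ‖y - x‖ ^ 2 := by
    rw [intervalIntegral.integral_add (intervalIntegrable_const)
      (Continuous.intervalIntegrable (by continuity) 0 1)]
    simp only [intervalIntegral.integral_const]
    have : ∫ t in (0:ℝ)..1, L * t * ‖y - x‖ ^ 2 = L / 2 * ‖y - x‖ ^ 2 := by
      have : (fun t : ℝ => L * t * ‖y - x‖ ^ 2) = fun t : ℝ => (L * ‖y - x‖ ^ 2) * t := by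
        funext t; ring
      rw [this, intervalIntegral.integral_const_mul, integral_id]
      ring
    rw [this]; simp
  rw [hc0, hc1] at hftc
  linarith [hmono.trans_eq hval, hftc.symm.le, hftc.le]


lemma aux_prox_ineq {E : Type*} [NormedAddCommGroup E] [InnerProductSpace ℝ E]
    {g : E → ℝ} (hconvg : ConvexOn ℝ Set.univ g) {L : ℝ} (hL : 0 < L)
    {u y : E} (hmin : ∀ w, 1 / 2 * ‖y - u‖ ^ 2 + (1 / L) * g y
        ≤ 1 / 2 * ‖w - u‖ ^ 2 + (1 / L) * g w) (z : E) :
    ⟪u - y, z - y⟫ ≤ (1 / L) * (g z - g y) := by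
  have key : ∀ t : ℝ, t ∈ Set.Ioc (0:ℝ) 1 →
      0 ≤ ⟪y - u, z - y⟫ + t / 2 * ‖z - y‖ ^ 2 + (1 / L) * (g z - g y) := by
    intro t ht
    have hmin' := hmin (y + t • (z - y))
    have hnorm : ‖y + t • (z - y) - u‖ ^ 2
        = ‖y - u‖ ^ 2 + 2 * (t * ⟪y - u, z - y⟫) + t ^ 2 * ‖z - y‖ ^ 2 := by
      have : y + t • (z - y) - u = (y - u) + t • (z - y) := by abel
      rw [this, norm_add_sq_real, real_inner_smul_right, norm_smul]
      rw [mul_pow, Real.norm_eq_abs, sq_abs]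
    have hg : g (y + t • (z - y)) ≤ (1 - t) * g y + t * g z := by
      have hxt : y + t • (z - y) = (1 - t) • y + t • z := by module
      rw [hxt]
      simpa using hconvg.2 (Set.mem_univ y) (Set.mem_univ z)
        (by linarith [ht.2] : (0:ℝ) ≤ 1 - t) ht.1.le (by ring)
    have hL' : 0 < 1 / L := by positivity
    have h0 : 0 ≤ t * ⟪y - u, z - y⟫ + t ^ 2 / 2 * ‖z - y‖ ^ 2 + (1 / L) * (t * (g z - g y)) := by
      nlinarith [hmin', hnorm, mul_le_mul_of_nonneg_left hg hL'.le]
    have ht0 := ht.1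
    nlinarith [h0]
  have htend : Filter.Tendsto
      (fun t : ℝ => ⟪y - u, z - y⟫ + t / 2 * ‖z - y‖ ^ 2 + (1 / L) * (g z - g y))
      (nhdsWithin 0 (Set.Ioi 0))
      (nhds (⟪y - u, z - y⟫ + 0 / 2 * ‖z - y‖ ^ 2 + (1 / L) * (g z - g y))) := by
    apply Filter.Tendsto.mono_left _ nhdsWithin_le_nhds
    exact (Continuous.tendsto (by continuity) 0)
  have hge : 0 ≤ ⟪y - u, z - y⟫ + 0 / 2 * ‖z - y‖ ^ 2 + (1 / L) * (g z - g y) := by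
    refine ge_of_tendsto htend ?_
    filter_upwards [Ioc_mem_nhdsGT_of_mem (by norm_num : (0:ℝ) ∈ Set.Ico 0 1)] with t ht
    exact key t ht
  have : ⟪u - y, z - y⟫ = - ⟪y - u, z - y⟫ := by
    rw [← inner_neg_left]; congr 1; abel
  rw [this]; linarith [hge]

lemma aux_one_step {E : Type*} [NormedAddCommGroup E] [InnerProductSpace ℝ E] [CompleteSpace E]
    {f g : E → ℝ} {f' : E → E} {L : ℝ} (hL : 0 < L)
    (hconvf : ConvexOn ℝ Set.univ f)
    (hgrad : ∀ x, HasGradientAt f (f' x) x)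
    (hlip : ∀ x y, ‖f' x - f' y‖ ≤ L * ‖x - y‖)
    (hconvg : ConvexOn ℝ Set.univ g)
    {T : E → E}
    (hT : ∀ x z, 1 / 2 * ‖T x - (x - (1 / L) • f' x)‖ ^ 2 + (1 / L) * g (T x)
        ≤ 1 / 2 * ‖z - (x - (1 / L) • f' x)‖ ^ 2 + (1 / L) * g z)
    (x z : E) :
    f (T x) + g (T x) + L / 2 * ‖T x - z‖ ^ 2 ≤ f z + g z + L / 2 * ‖x - z‖ ^ 2 := by
  set y := T x with hy
  have hB := aux_descent hL hgrad hlip x y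
  have hA := aux_convex_grad_ineq hconvf (hgrad x) (z := z)
  have hC := aux_prox_ineq hconvg hL (u := x - (1 / L) • f' x) (y := y) (fun w => hT x w) z
  have hexp : x - (1 / L) • f' x - y = (x - y) - (1 / L) • f' x := by abel
  have hC' : ⟪x - y, z - y⟫ - (1 / L) * ⟪f' x, z - y⟫ ≤ (1 / L) * (g z - g y) := by
    rw [hexp, inner_sub_left, real_inner_smul_left] at hC
    exact hC
  have hL0 : L ≠ 0 := ne_of_gt hL
  have hC2 : L * ⟪x - y, z - y⟫ - ⟪f' x, z - y⟫ ≤ g z - g y := by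
    have h := mul_le_mul_of_nonneg_left hC' hL.le
    field_simp at h
    linarith [h]
  have hin : ⟪f' x, y - x⟫ + ⟪f' x, z - y⟫ = ⟪f' x, z - x⟫ := by
    rw [← inner_add_right]
    congr 1
    abel
  have hsym : ⟪z - y, y - x⟫ = -⟪x - y, z - y⟫ := by
    rw [real_inner_comm]
    have h : (y : E) - x = -(x - y) := by abel
    rw [h, inner_neg_left]
  have hnorm : ‖z - x‖ ^ 2 = ‖z - y‖ ^ 2 + 2 * ⟪z - y, y - x⟫ + ‖y - x‖ ^ 2 := by
    have h : (z : E) - x = (z - y) + (y - x) := by abel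
    rw [h, norm_add_sq_real]
  rw [hsym] at hnorm
  have hnorm2 : L / 2 * ‖z - x‖ ^ 2
      = L / 2 * ‖z - y‖ ^ 2 - L * ⟪x - y, z - y⟫ + L / 2 * ‖y - x‖ ^ 2 := by
    rw [hnorm]; ring
  have e1 : ‖x - z‖ = ‖z - x‖ := norm_sub_rev _ _
  have e2 : ‖y - z‖ = ‖z - y‖ := norm_sub_rev _ _
  rw [e1, e2]
  linarith [hB, hA, hC2, hnorm2, hin]

lemma aux_rate (b r : ℕ → ℝ) (v : ℝ) (hmono : ∀ i, b (i + 1) ≤ b i)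
    (hstep : ∀ i, b (i + 1) + r (i + 1) ≤ v + r i) (hr : ∀ i, 0 ≤ r i) (n : ℕ) :
    (n : ℝ) * (b n - v) ≤ r 0 := by
  have hsum : ∀ m : ℕ, (m : ℝ) * (b m - v) ≤ r 0 - r m := by
    intro m
    induction m with
    | zero => simp
    | succ m ih =>
      have h1 : (m : ℝ) * (b (m + 1) - v) ≤ (m : ℝ) * (b m - v) :=
        mul_le_mul_of_nonneg_left (by linarith [hmono m]) (Nat.cast_nonneg m)
      push_cast
      nlinarith [hstep m, ih]
  linarith [hsum n, hr n]

theorem restarted_pg_linear_convergence {d : ℕ} (L c θ ε₀ : ℝ)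
    (hL : 0 < L) (hc : 0 < c) (hε₀ : 0 < ε₀) (hθ : θ ∈ Set.Ioc (0:ℝ) (1/2))
    (f g : EuclideanSpace ℝ (Fin d) → ℝ)
    (f' : EuclideanSpace ℝ (Fin d) → EuclideanSpace ℝ (Fin d))
    (hconvf : ConvexOn ℝ Set.univ f)
    (hgrad : ∀ x, HasGradientAt f (f' x) x)
    (hlip : ∀ x y, ‖f' x - f' y‖ ≤ L * ‖x - y‖)
    (hconvg : ConvexOn ℝ Set.univ g) (hlsc : LowerSemicontinuous g)
    (T : EuclideanSpace ℝ (Fin d) → EuclideanSpace ℝ (Fin d))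
    (hT : ∀ x z, 1 / 2 * ‖T x - (x - (1 / L) • f' x)‖ ^ 2 + (1 / L) * g (T x)
        ≤ 1 / 2 * ‖z - (x - (1 / L) • f' x)‖ ^ 2 + (1 / L) * g z)
    (Ω : Set (EuclideanSpace ℝ (Fin d)))
    (hΩ : Ω = {z | ∀ y, f z + g z ≤ f y + g y}) (hne : Ω.Nonempty)
    (Fstar : ℝ) (hfs : ∀ z ∈ Ω, f z + g z = Fstar)
    (heb : ∀ x, f x + g x - Fstar ≤ ε₀ →
        Metric.infDist x Ω ≤ c * (f x + g x - Fstar) ^ θ)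
    (x : ℕ → EuclideanSpace ℝ (Fin d))
    (h0 : f (x 0) + g (x 0) - Fstar ≤ ε₀)
    (hstage : ∀ k : ℕ, x (k + 1) = T^[⌈c ^ 2 * L * (ε₀ / 2 ^ k) ^ (2 * θ - 1)⌉₊] (x k)) :
    ∀ k : ℕ, f (x k) + g (x k) - Fstar ≤ ε₀ / 2 ^ k := by
  obtain ⟨z0, hz0⟩ := hne
  have hz0min : ∀ y, f z0 + g z0 ≤ f y + g y := by rw [hΩ] at hz0; exact hz0
  have hFstar0 : f z0 + g z0 = Fstar := hfs z0 hz0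
  have hFnn : ∀ w, 0 ≤ f w + g w - Fstar := fun w => by linarith [hz0min w]
  have hone : ∀ a z, f (T a) + g (T a) + L / 2 * ‖T a - z‖ ^ 2
      ≤ f z + g z + L / 2 * ‖a - z‖ ^ 2 :=
    aux_one_step hL hconvf hgrad hlip hconvg hT
  -- rate for any start point, any number of steps, any z ∈ Ω
  have hrate : ∀ (a : EuclideanSpace ℝ (Fin d)) (n : ℕ), ∀ z ∈ Ω,
      (n : ℝ) * (f (T^[n] a) + g (T^[n] a) - Fstar) ≤ L / 2 * ‖a - z‖ ^ 2 := by
    intro a n z hz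
    have hFz : f z + g z = Fstar := hfs z hz
    refine aux_rate (fun i => f (T^[i] a) + g (T^[i] a))
      (fun i => L / 2 * ‖T^[i] a - z‖ ^ 2) Fstar ?_ ?_ (fun i => by positivity) n
    · intro i
      have h := hone (T^[i] a) (T^[i] a)
      rw [← Function.iterate_succ_apply' T i a] at h
      simp only [Nat.succ_eq_add_one, sub_self, norm_zero] at h
      have h2 : L / 2 * ‖T^[i + 1] a - T^[i] a‖ ^ 2 ≥ 0 := by positivity
      show f (T^[i + 1] a) + g (T^[i + 1] a) ≤ f (T^[i] a) + g (T^[i] a)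
      nlinarith [h]
    · intro i
      have h := hone (T^[i] a) z
      rw [← Function.iterate_succ_apply' T i a] at h
      simp only [Nat.succ_eq_add_one] at h
      show f (T^[i + 1] a) + g (T^[i + 1] a) + L / 2 * ‖T^[i + 1] a - z‖ ^ 2
          ≤ Fstar + L / 2 * ‖T^[i] a - z‖ ^ 2
      linarith [h, hFz.le, hFz.ge]
  intro k
  induction k with
  | zero => simpa using h0
  | succ k ih =>
    set ε : ℝ := ε₀ / 2 ^ k with hεdef
    have hε : 0 < ε := by positivity
    have hεle : ε ≤ ε₀ := by
      rw [hεdef, div_le_iff₀ (by positivity)]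
      nlinarith [one_le_pow₀ (by norm_num : (1:ℝ) ≤ 2) (n := k), hε₀.le]
    set n : ℕ := ⌈c ^ 2 * L * ε ^ (2 * θ - 1)⌉₊ with hn
    have hposreal : 0 < c ^ 2 * L * ε ^ (2 * θ - 1) := by
      have := Real.rpow_pos_of_pos hε (2 * θ - 1)
      positivity
    have hnge : c ^ 2 * L * ε ^ (2 * θ - 1) ≤ (n : ℝ) := Nat.le_ceil _
    set A : ℝ := f (x (k + 1)) + g (x (k + 1)) - Fstar with hA
    have hAnn : 0 ≤ A := hFnn _
    have hxk1 : x (k + 1) = T^[n] (x k) := hstage k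
    have hkey : ∀ z ∈ Ω, (n : ℝ) * A ≤ L / 2 * ‖x k - z‖ ^ 2 := by
      intro z hz
      rw [hA, hxk1]
      exact hrate (x k) n z hz
    -- pass to infDist
    set D : ℝ := Metric.infDist (x k) Ω with hD
    have hDnn : 0 ≤ D := Metric.infDist_nonneg
    have hinf : (n : ℝ) * A ≤ L / 2 * D ^ 2 := by
      have hsq : Real.sqrt ((n : ℝ) * A * (2 / L)) ≤ D := by
        refine le_of_not_gt fun hlt => ?_
        obtain ⟨z, hz, hdz⟩ := (Metric.infDist_lt_iff ⟨z0, hz0⟩).mp hlt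
        have h1 : (n : ℝ) * A * (2 / L) ≤ ‖x k - z‖ ^ 2 := by
          have := hkey z hz
          have h2 : (n : ℝ) * A * (2 / L) ≤ (L / 2 * ‖x k - z‖ ^ 2) * (2 / L) :=
            mul_le_mul_of_nonneg_right this (by positivity)
          calc (n : ℝ) * A * (2 / L) ≤ (L / 2 * ‖x k - z‖ ^ 2) * (2 / L) := h2
            _ = ‖x k - z‖ ^ 2 := by field_simp
        have h3 : Real.sqrt ((n : ℝ) * A * (2 / L)) ≤ ‖x k - z‖ := by
          rw [← Real.sqrt_sq (norm_nonneg (x k - z))]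
          exact Real.sqrt_le_sqrt h1
        rw [← dist_eq_norm] at h3
        exact absurd hdz (not_lt.mpr h3)
      have h4 : (n : ℝ) * A * (2 / L) ≤ D ^ 2 := by
        have := pow_le_pow_left₀ (Real.sqrt_nonneg _) hsq 2
        rwa [Real.sq_sqrt (by positivity)] at this
      calc (n : ℝ) * A = ((n : ℝ) * A * (2 / L)) * (L / 2) := by field_simp
        _ ≤ D ^ 2 * (L / 2) := mul_le_mul_of_nonneg_right h4 (by positivity)
        _ = L / 2 * D ^ 2 := by ring
    -- HEB bound
    have hheb : D ≤ c * ε ^ θ := by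
      have h1 := heb (x k) (ih.trans hεle)
      have h2 : (f (x k) + g (x k) - Fstar) ^ θ ≤ ε ^ θ :=
        Real.rpow_le_rpow (hFnn (x k)) ih hθ.1.le
      calc D ≤ c * (f (x k) + g (x k) - Fstar) ^ θ := h1
        _ ≤ c * ε ^ θ := by nlinarith [h2]
    have hD2 : D ^ 2 ≤ c ^ 2 * (ε ^ (2 * θ - 1) * ε) := by
      have hP2 : (ε ^ θ) ^ 2 = ε ^ (2 * θ - 1) * ε := by
        have h1 : ε ^ (2 * θ - 1) * ε = ε ^ (2 * θ - 1) * ε ^ (1:ℝ) := by rw [Real.rpow_one]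
        rw [h1, ← Real.rpow_add hε, ← Real.rpow_natCast (ε ^ θ) 2, ← Real.rpow_mul hε.le]
        congr 1
        push_cast
        ring
      calc D ^ 2 ≤ (c * ε ^ θ) ^ 2 := pow_le_pow_left₀ hDnn hheb 2
        _ = c ^ 2 * (ε ^ θ) ^ 2 := by ring
        _ = c ^ 2 * (ε ^ (2 * θ - 1) * ε) := by rw [hP2]
    -- combine
    have hgoal : A ≤ ε / 2 := by
      have hS : 0 < ε ^ (2 * θ - 1) := Real.rpow_pos_of_pos hε _
      have h5 : (n : ℝ) * A ≤ L / 2 * (c ^ 2 * (ε ^ (2 * θ - 1) * ε)) := by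
        calc (n : ℝ) * A ≤ L / 2 * D ^ 2 := hinf
          _ ≤ L / 2 * (c ^ 2 * (ε ^ (2 * θ - 1) * ε)) := by nlinarith [hD2]
      have h6 : (c ^ 2 * L * ε ^ (2 * θ - 1)) * A ≤ (n : ℝ) * A :=
        mul_le_mul_of_nonneg_right hnge hAnn
      have h7 : (c ^ 2 * L * ε ^ (2 * θ - 1)) * A
          ≤ L / 2 * (c ^ 2 * (ε ^ (2 * θ - 1) * ε)) := h6.trans h5
      have hQ : 0 < c ^ 2 * L * ε ^ (2 * θ - 1) := hposreal
      nlinarith [h7, hQ, hAnn]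
    have : ε₀ / 2 ^ (k + 1) = ε / 2 := by
      rw [hεdef, pow_succ]; ring
    rw [this]
    exact hgoal
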